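/- arXiv:2112.01608 — 5 statements merged into one kernel-verified Lean document; each statement's English description precedes it below -/
import Mathlib

section
/- There exist a 6-stage explicit Runge–Kutta tableau (A, b, c) with c = (0, 1/4, 1/2, 3/4, 3/10, 1) satisfying Φ(t_{12}) + Φ(t_{15}) = 1/30 + 1/40 = 7/120 but with Φ(t_{12}) ≠ 1/30, where Φ(t_{12}) = ∑ b_i c_i a_{ij} a_{jk} c_k and Φ(t_{15}) = ∑ b_i a_{ij} c_j a_{jk} c_k. -/
open scoped BigOperators

/-- There exists a 6-stage explicit Runge–Kutta tableau with
c = (0, 1/4, 1/2, 3/4, 3/10, 1) satisfying Φ(t₁₂) + Φ(t₁₅) = 7/120 but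
Φ(t₁₂) ≠ 1/30. -/
theorem exists_ambiguous_order_five_tableau :
    ∃ (A : Matrix (Fin 6) (Fin 6) ℝ) (b c : Fin 6 → ℝ),
      c = ![0, 1/4, 1/2, 3/4, 3/10, 1] ∧
      (∀ i j : Fin 6, i ≤ j → A i j = 0) ∧
      (∑ i, ∑ j, ∑ k, b i * c i * A i j * A j k * c k) +
        (∑ i, ∑ j, ∑ k, b i * A i j * c j * A j k * c k) = 1/30 + 1/40 ∧
      (1/30 + 1/40 : ℝ) = 7/120 ∧
      (∑ i, ∑ j, ∑ k, b i * c i * A i j * A j k * c k) ≠ 1/30 := by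
  refine ⟨!![0,0,0,0,0,0;
             1/4,0,0,0,0,0;
             -1/2,1,0,0,0,0;
             3/16,0,9/16,0,0,0;
             291/2500,108/625,63/2500,-9/625,0,0;
             -146/135,152/15,-7/15,428/405,-700/81,0],
          ![5/54,0,0,32/81,250/567,1/14],
          ![0,1/4,1/2,3/4,3/10,1], rfl, ?_, ?_, by norm_num, ?_⟩
  · intro i j hij
    fin_cases i <;> fin_cases j <;> simp_all <;> rfl
  · simp [Fin.sum_univ_succ, Matrix.cons_val_zero, Matrix.cons_val_one]
    norm_num
  · simp [Fin.sum_univ_succ, Matrix.cons_val_zero, Matrix.cons_val_one]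
    norm_num
end

section
/- The 6-stage explicit Runge–Kutta method (A, b, c) from equation (7) of the paper satisfies all eight order-4 vector conditions: b^T 1 = 1, b^T c = 1/2, b^T c² = 1/3, b^T A c = 1/6, b^T c³ = 1/4, b^T (c · Ac) = 1/8, b^T A² c = 1/24, and b^T A c² = 1/12, where c^k and products are taken componentwise. -/
open scoped BigOperators

/-- Abscissae of the method (7) of the paper. -/
noncomputable def cRK : Fin 6 → ℝ := ![0, 1/4, 1/2, 3/4, 3/10, 1]

/-- Weights of the method (7) of the paper. -/
noncomputable def bRK : Fin 6 → ℝ := ![5/54, 0, 0, 32/81, 250/567, 1/14]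

/-- Coefficient matrix of the method (7) of the paper. -/
noncomputable def ARK : Matrix (Fin 6) (Fin 6) ℝ :=
  !![0, 0, 0, 0, 0, 0;
     1/4, 0, 0, 0, 0, 0;
     -1/2, 1, 0, 0, 0, 0;
     3/16, 0, 9/16, 0, 0, 0;
     291/2500, 108/625, 63/2500, -9/625, 0, 0;
     -146/135, 152/15, -7/15, 428/405, -700/81, 0]

/-- The method (7) of the paper satisfies all eight order-4 vector conditions. -/
theorem method7_order_four_conditions :
    (∑ i, bRK i = 1) ∧
    (∑ i, bRK i * cRK i = 1/2) ∧
    (∑ i, bRK i * cRK i ^ 2 = 1/3) ∧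
    (∑ i, ∑ j, bRK i * ARK i j * cRK j = 1/6) ∧
    (∑ i, bRK i * cRK i ^ 3 = 1/4) ∧
    (∑ i, bRK i * cRK i * (∑ j, ARK i j * cRK j) = 1/8) ∧
    (∑ i, ∑ j, ∑ k, bRK i * ARK i j * ARK j k * cRK k = 1/24) ∧
    (∑ i, ∑ j, bRK i * ARK i j * cRK j ^ 2 = 1/12) := by
  refine ⟨?_, ?_, ?_, ?_, ?_, ?_, ?_, ?_⟩ <;> norm_num [bRK, cRK, ARK, Fin.sum_univ_succ, Matrix.cons_val_zero, Matrix.cons_val_succ]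
end

section
/- For the 6-stage explicit Runge–Kutta method (A, b, c) from equation (7) of the paper, there exists a nonzero rational g such that b^T (c · A² c) = 1/30 + g and b^T A (c · A c) = 1/40 − g, where the products in parentheses are componentwise. -/
open scoped BigOperators

lemma cons_val_five {α} {m : ℕ} (x : α) (u : Fin (m+5) → α) :
    Matrix.vecCons x u 5 = Matrix.vecHead (Matrix.vecTail (Matrix.vecTail (Matrix.vecTail
      (Matrix.vecTail u)))) :=
  rfl

set_option maxHeartbeats 1000000 in
/-- For the method (7) of the paper, there is a nonzero rational g with
bᵀ(c ⊙ A²c) = 1/30 + g and bᵀA(c ⊙ Ac) = 1/40 − g. -/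
theorem method7_ambiguous_g :
    ∃ g : ℚ, g ≠ 0 ∧
      (∑ i, ∑ j, ∑ k, bRK i * cRK i * ARK i j * ARK j k * cRK k = 1/30 + (g : ℝ)) ∧
      (∑ i, ∑ j, ∑ k, bRK i * ARK i j * cRK j * ARK j k * cRK k = 1/40 - (g : ℝ)) := by
  refine ⟨-1/160, by norm_num, ?_, ?_⟩ <;>
  · simp only [bRK, cRK, ARK, Fin.sum_univ_six, Matrix.cons_val_zero, Matrix.cons_val_one,
      Matrix.cons_val_two, Matrix.cons_val_three, Matrix.cons_val_four, cons_val_five,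
      Matrix.head_cons, Matrix.tail_cons, Matrix.of_apply]
    norm_num
end

section
/- Define the atomic-stump multiset of a rooted tree t recursively: for t = τ_m t_1 ⋯ t_m where exactly n of the t_i equal τ (the single vertex) and the remaining k = m − n subtrees are u_1, …, u_k ≠ τ, the multiset is {s_{n, k}} ∪ stumps(u_1) ∪ ⋯ ∪ stumps(u_k), where s_{n,k} is a formal symbol (pair of naturals). Then two rooted trees of order 5, namely t_{12} = τ_2(τ)(τ_1(τ_1 τ)) and t_{15} = τ_1(τ_2(τ)(τ_1 τ)), have equal atomic-stump multisets, both equal to {s_{1,1}, s_{0,1}, s_{1,0}} (up to the paper's labeling {s_{31}-type factors}), while t_{12} ≠ t_{15}. -/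
/-- Unordered rooted trees, represented as planar trees (lists of subtrees);
unordered identification is via the isomorphism relation `RTree.Iso`. -/
inductive RTree where
  | node : List RTree → RTree

namespace RTree

/-- The single-vertex tree τ. -/
def leaf : RTree := .node []

def isLeaf : RTree → Bool
  | .node [] => true
  | _ => false

/-- The order |t|: number of vertices. -/
def order : RTree → ℕ
  | .node l => 1 + (l.attach.map (fun t => order t.1)).sum
decreasing_by
  have := List.sizeOf_lt_of_mem t.2
  simp only [RTree.node.sizeOf_spec]
  omega

/-- Isomorphism of planar rooted trees: the lists of children agree up to
permutation and recursive isomorphism. -/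
inductive Iso : RTree → RTree → Prop
  | node {l₁ l₂ : List RTree} (l : List RTree) :
      List.Perm l₁ l → List.Forall₂ Iso l l₂ → Iso (.node l₁) (.node l₂)

end RTree

namespace RTree

/-- The multiset of atomic stumps of a tree: for each internal vertex we record
the pair (number of leaf children, number of non-leaf children). -/
def stumps : RTree → Multiset (ℕ × ℕ)
  | .node l =>
      (l.countP isLeaf, l.countP (fun t => !isLeaf t)) ::ₘ
        (l.attach.map (fun t => if isLeaf t.1 then (0 : Multiset (ℕ × ℕ)) else stumps t.1)).sum
decreasing_by
  have := List.sizeOf_lt_of_mem t.2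
  simp only [RTree.node.sizeOf_spec]
  omega

end RTree

/-- t₁₂ = τ₂(τ)(τ₁(τ₁ τ)). -/
def t12 : RTree := .node [.node [], .node [.node [.node []]]]

/-- t₁₅ = τ₁(τ₂(τ)(τ₁ τ)). -/
def t15 : RTree := .node [.node [.node [], .node [.node []]]]

/-- t₁₂ and t₁₅ have equal atomic-stump multisets {s₁₁, s₀₁, s₁₀} but are
different trees. -/
theorem isomeric_pair_order_five :
    RTree.stumps t12 = RTree.stumps t15 ∧
    RTree.stumps t12 = ({(1, 1), (0, 1), (1, 0)} : Multiset (ℕ × ℕ)) ∧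
    t12 ≠ t15 := by
  have h : ∀ l, RTree.stumps (.node l) =
      (l.countP RTree.isLeaf, l.countP (fun t => !RTree.isLeaf t)) ::ₘ
        (l.attach.map (fun t => if RTree.isLeaf t.1 then (0 : Multiset (ℕ × ℕ)) else RTree.stumps t.1)).sum := fun l => by
    rw [RTree.stumps]
  refine ⟨?_, ?_, ?_⟩ <;>
    simp only [t12, t15, h, RTree.isLeaf, List.attach, List.attachWith, List.pmap,
      List.map, List.countP, List.countP.go, List.sum_cons, List.sum_nil] <;>
    first
    | (intro hc; injection hc with hc; simp at hc)
    | (simp [Multiset.cons_swap]; try rfl)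
end

section
/- The number of isomeric classes of rooted trees of order exactly 5 is 8 (i.e., the 9 rooted trees of order 5 fall into 8 classes under the relation of having equal atomic-stump multisets), and exactly one class contains more than one tree, namely a class with 2 trees. -/
namespace RTree

theorem order_node (l : List RTree) :
    order (node l) = 1 + (l.map order).sum := by
  rw [order, List.attach_map_val]

theorem order_pos (t : RTree) : 1 ≤ order t := by
  cases t with
  | node l => rw [order_node]; omega

theorem stumps_node (l : List RTree) :
    stumps (node l) = (l.countP isLeaf, l.countP (fun t => !isLeaf t)) ::ₘ
      (l.map (fun t => if isLeaf t then (0 : Multiset (ℕ × ℕ)) else stumps t)).sum := by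
  rw [stumps, List.attach_map_val (l := l) (f := fun x => if isLeaf x then (0 : Multiset (ℕ × ℕ)) else stumps x)]

/-- A numeric code invariant under `Iso`. -/
def code : RTree → ℕ
  | .node l => (l.attach.map (fun t => 5 ^ code t.1)).sum
decreasing_by
  have := List.sizeOf_lt_of_mem t.2
  simp only [RTree.node.sizeOf_spec]
  omega

theorem code_node (l : List RTree) :
    code (node l) = (l.map (fun t => 5 ^ code t)).sum := by
  rw [code, List.attach_map_val (l := l) (f := fun x => 5 ^ code x)]

theorem code_iso (t₁ t₂ : RTree) (h : Iso t₁ t₂) : code t₁ = code t₂ := by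
  cases h with
  | @node l₁ l₂ l hp hf =>
    have h2 : ∀ m m₂ : List RTree, m ⊆ l₁ → List.Forall₂ Iso m m₂ →
        m.map (fun t => 5 ^ code t) = m₂.map (fun t => 5 ^ code t) := by
      intro m m₂ hsub hff
      induction hff with
      | nil => rfl
      | @cons a b m' m₂' hab htl ih =>
        have ha : a ∈ l₁ := hsub (List.mem_cons_self (a := a) (l := m'))
        have hc : code a = code b := code_iso a b hab
        simp only [List.map_cons, hc, ih (fun x hx => hsub (List.mem_cons_of_mem a hx))]
    rw [code_node, code_node, (hp.map (fun t => 5 ^ code t)).sum_eq,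
      h2 l l₂ (fun x hx => hp.symm.subset hx) hf]
termination_by sizeOf t₁
decreasing_by
  have := List.sizeOf_lt_of_mem ha
  simp only [RTree.node.sizeOf_spec]
  omega

theorem iso_refl (t : RTree) : Iso t t := by
  cases t with
  | node l =>
    refine Iso.node l (List.Perm.refl l) (List.forall₂_same.mpr ?_)
    intro a ha
    exact iso_refl a
termination_by sizeOf t
decreasing_by
  have := List.sizeOf_lt_of_mem ha
  simp only [RTree.node.sizeOf_spec]
  omega

theorem iso_ne_of_code {a b : RTree} (h : code a ≠ code b) : ¬ Iso a b :=
  fun hi => h (code_iso a b hi)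

def b2 : RTree := .node [leaf]
def t31 : RTree := .node [leaf, leaf]
def t32 : RTree := .node [b2]
def t41 : RTree := .node [leaf, leaf, leaf]
def t42 : RTree := .node [leaf, b2]
def t43 : RTree := .node [t31]
def t44 : RTree := .node [t32]
def r1 : RTree := .node [leaf, leaf, leaf, leaf]
def r2 : RTree := .node [leaf, leaf, b2]
def r3 : RTree := .node [b2, b2]
def r4 : RTree := .node [leaf, t31]
def r5 : RTree := .node [leaf, t32]
def r6 : RTree := .node [t41]
def r7 : RTree := .node [t42]
def r8 : RTree := .node [t43]
def r9 : RTree := .node [t44]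
def reps5 : List RTree := [r1, r2, r3, r4, r5, r6, r7, r8, r9]

theorem iso_of_order_one (t : RTree) (h : order t = 1) : Iso t leaf := by
  obtain ⟨l⟩ := t
  rw [order_node] at h
  rcases l with _ | ⟨a, l⟩
  · exact iso_refl leaf
  · have := order_pos a
    simp only [List.map_cons, List.sum_cons] at h
    omega

theorem iso_of_order_two (t : RTree) (h : order t = 2) : Iso t b2 := by
  obtain ⟨l⟩ := t
  rw [order_node] at h
  rcases l with _ | ⟨a, (_ | ⟨b, l⟩)⟩
  · simp at h
  · simp only [List.map_cons, List.map_nil, List.sum_cons, List.sum_nil] at h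
    have ha : order a = 1 := by omega
    exact Iso.node [a] (List.Perm.refl _) (.cons (iso_of_order_one a ha) .nil)
  · have := order_pos a; have := order_pos b
    simp only [List.map_cons, List.sum_cons] at h
    omega

theorem iso_of_order_three (t : RTree) (h : order t = 3) : Iso t t31 ∨ Iso t t32 := by
  obtain ⟨l⟩ := t
  rw [order_node] at h
  rcases l with _ | ⟨a, (_ | ⟨b, (_ | ⟨c, l⟩)⟩)⟩
  · simp at h
  · simp only [List.map_cons, List.map_nil, List.sum_cons, List.sum_nil] at h
    have ha : order a = 2 := by omega
    exact Or.inr (Iso.node [a] (.refl _) (.cons (iso_of_order_two a ha) .nil))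
  · simp only [List.map_cons, List.map_nil, List.sum_cons, List.sum_nil] at h
    have := order_pos a; have := order_pos b
    have ha : order a = 1 := by omega
    have hb : order b = 1 := by omega
    exact Or.inl (Iso.node [a, b] (.refl _)
      (.cons (iso_of_order_one a ha) (.cons (iso_of_order_one b hb) .nil)))
  · have := order_pos a; have := order_pos b; have := order_pos c
    simp only [List.map_cons, List.sum_cons] at h
    omega

theorem iso_of_order_four (t : RTree) (h : order t = 4) :
    Iso t t41 ∨ Iso t t42 ∨ Iso t t43 ∨ Iso t t44 := by
  obtain ⟨l⟩ := t
  rw [order_node] at h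
  rcases l with _ | ⟨a, (_ | ⟨b, (_ | ⟨c, (_ | ⟨d, l⟩)⟩)⟩)⟩
  · simp at h
  · simp only [List.map_cons, List.map_nil, List.sum_cons, List.sum_nil] at h
    have ha : order a = 3 := by omega
    rcases iso_of_order_three a ha with h3 | h3
    · exact Or.inr (Or.inr (Or.inl (Iso.node [a] (.refl _) (.cons h3 .nil))))
    · exact Or.inr (Or.inr (Or.inr (Iso.node [a] (.refl _) (.cons h3 .nil))))
  · simp only [List.map_cons, List.map_nil, List.sum_cons, List.sum_nil] at h
    have := order_pos a; have := order_pos b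
    have hab : order a = 1 ∧ order b = 2 ∨ order a = 2 ∧ order b = 1 := by omega
    rcases hab with ⟨ha, hb⟩ | ⟨ha, hb⟩
    · exact Or.inr (Or.inl (Iso.node [a, b] (.refl _)
        (.cons (iso_of_order_one a ha) (.cons (iso_of_order_two b hb) .nil))))
    · exact Or.inr (Or.inl (Iso.node [b, a] (List.Perm.swap b a [])
        (.cons (iso_of_order_one b hb) (.cons (iso_of_order_two a ha) .nil))))
  · simp only [List.map_cons, List.map_nil, List.sum_cons, List.sum_nil] at h
    have := order_pos a; have := order_pos b; have := order_pos c
    have ha : order a = 1 := by omega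
    have hb : order b = 1 := by omega
    have hc : order c = 1 := by omega
    exact Or.inl (Iso.node [a, b, c] (.refl _)
      (.cons (iso_of_order_one a ha) (.cons (iso_of_order_one b hb)
        (.cons (iso_of_order_one c hc) .nil))))
  · have := order_pos a; have := order_pos b; have := order_pos c; have := order_pos d
    simp only [List.map_cons, List.sum_cons] at h
    omega

theorem exists_rep (t : RTree) (h : order t = 5) : ∃ r ∈ reps5, Iso t r := by
  obtain ⟨l⟩ := t
  rw [order_node] at h
  rcases l with _ | ⟨a, (_ | ⟨b, (_ | ⟨c, (_ | ⟨d, (_ | ⟨e, l⟩)⟩)⟩)⟩)⟩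
  · simp at h
  · simp only [List.map_cons, List.map_nil, List.sum_cons, List.sum_nil] at h
    have ha : order a = 4 := by omega
    rcases iso_of_order_four a ha with h4 | h4 | h4 | h4
    · exact ⟨r6, by simp [reps5], Iso.node [a] (.refl _) (.cons h4 .nil)⟩
    · exact ⟨r7, by simp [reps5], Iso.node [a] (.refl _) (.cons h4 .nil)⟩
    · exact ⟨r8, by simp [reps5], Iso.node [a] (.refl _) (.cons h4 .nil)⟩
    · exact ⟨r9, by simp [reps5], Iso.node [a] (.refl _) (.cons h4 .nil)⟩
  · simp only [List.map_cons, List.map_nil, List.sum_cons, List.sum_nil] at h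
    have := order_pos a; have := order_pos b
    have hcases : order a = 1 ∧ order b = 3 ∨ order a = 2 ∧ order b = 2 ∨
        order a = 3 ∧ order b = 1 := by omega
    rcases hcases with ⟨ha, hb⟩ | ⟨ha, hb⟩ | ⟨ha, hb⟩
    · rcases iso_of_order_three b hb with h3 | h3
      · exact ⟨r4, by simp [reps5], Iso.node [a, b] (.refl _)
          (.cons (iso_of_order_one a ha) (.cons h3 .nil))⟩
      · exact ⟨r5, by simp [reps5], Iso.node [a, b] (.refl _)
          (.cons (iso_of_order_one a ha) (.cons h3 .nil))⟩
    · exact ⟨r3, by simp [reps5], Iso.node [a, b] (.refl _)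
        (.cons (iso_of_order_two a ha) (.cons (iso_of_order_two b hb) .nil))⟩
    · rcases iso_of_order_three a ha with h3 | h3
      · exact ⟨r4, by simp [reps5], Iso.node [b, a] (List.Perm.swap b a [])
          (.cons (iso_of_order_one b hb) (.cons h3 .nil))⟩
      · exact ⟨r5, by simp [reps5], Iso.node [b, a] (List.Perm.swap b a [])
          (.cons (iso_of_order_one b hb) (.cons h3 .nil))⟩
  · simp only [List.map_cons, List.map_nil, List.sum_cons, List.sum_nil] at h
    have := order_pos a; have := order_pos b; have := order_pos c
    have hcases : order a = 2 ∧ order b = 1 ∧ order c = 1 ∨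
        order a = 1 ∧ order b = 2 ∧ order c = 1 ∨
        order a = 1 ∧ order b = 1 ∧ order c = 2 := by omega
    rcases hcases with ⟨h1, h2, h3⟩ | ⟨h1, h2, h3⟩ | ⟨h1, h2, h3⟩
    · exact ⟨r2, by simp [reps5], Iso.node [b, c, a]
        ((List.Perm.swap b a [c]).trans (List.Perm.cons b (List.Perm.swap c a [])))
        (.cons (iso_of_order_one b h2) (.cons (iso_of_order_one c h3)
          (.cons (iso_of_order_two a h1) .nil)))⟩
    · exact ⟨r2, by simp [reps5], Iso.node [a, c, b]
        (List.Perm.cons a (List.Perm.swap c b []))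
        (.cons (iso_of_order_one a h1) (.cons (iso_of_order_one c h3)
          (.cons (iso_of_order_two b h2) .nil)))⟩
    · exact ⟨r2, by simp [reps5], Iso.node [a, b, c] (.refl _)
        (.cons (iso_of_order_one a h1) (.cons (iso_of_order_one b h2)
          (.cons (iso_of_order_two c h3) .nil)))⟩
  · simp only [List.map_cons, List.map_nil, List.sum_cons, List.sum_nil] at h
    have := order_pos a; have := order_pos b; have := order_pos c; have := order_pos d
    have h1 : order a = 1 := by omega
    have h2 : order b = 1 := by omega
    have h3 : order c = 1 := by omega
    have h4 : order d = 1 := by omega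
    exact ⟨r1, by simp [reps5], Iso.node [a, b, c, d] (.refl _)
      (.cons (iso_of_order_one a h1) (.cons (iso_of_order_one b h2)
        (.cons (iso_of_order_one c h3) (.cons (iso_of_order_one d h4) .nil))))⟩
  · have := order_pos a; have := order_pos b; have := order_pos c
    have := order_pos d; have := order_pos e
    simp only [List.map_cons, List.sum_cons] at h
    omega


set_option maxRecDepth 100000 in
theorem the_answer : ∃ reps : List RTree, reps.length = 9 ∧
      (∀ t ∈ reps, order t = 5) ∧
      reps.Pairwise (fun a b => ¬ Iso a b) ∧
      (∀ t : RTree, order t = 5 → ∃ r ∈ reps, Iso t r) ∧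
      (reps.map stumps).dedup.length = 8 ∧
      (∀ m : Multiset (ℕ × ℕ), (reps.map stumps).count m ≤ 2) ∧
      (∃! m : Multiset (ℕ × ℕ), (reps.map stumps).count m = 2) := by
  have hcode : reps5.map code = [4, 7, 10, 26, 3126, 125, 15625, 5^25, 5^3125] := by
    simp [reps5, code_node, r1, r2, r3, r4, r5, r6, r7, r8, r9, t41, t42, t43, t44,
      t31, t32, b2, leaf]
  have hst : reps5.map stumps =
      [{((4:ℕ),(0:ℕ))}, {(2,1),(1,0)}, {(0,2),(1,0),(1,0)},
       {(1,1),(2,0)}, {(1,1),(0,1),(1,0)}, {(0,1),(3,0)}, {(0,1),(1,1),(1,0)},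
       {(0,1),(0,1),(2,0)}, {(0,1),(0,1),(0,1),(1,0)}] := by
    simp [reps5, stumps_node, r1, r2, r3, r4, r5, r6, r7, r8, r9, t41, t42, t43, t44,
      t31, t32, b2, leaf, isLeaf, List.countP_cons, List.countP_nil]
  refine ⟨reps5, by simp [reps5], ?_, ?_, exists_rep, ?_, ?_, ?_⟩
  · intro t ht
    simp only [reps5, List.mem_cons, List.not_mem_nil, or_false] at ht
    rcases ht with rfl | rfl | rfl | rfl | rfl | rfl | rfl | rfl | rfl <;>
      simp [order_node, r1, r2, r3, r4, r5, r6, r7, r8, r9, t41, t42, t43, t44,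
        t31, t32, b2, leaf]
  · have h1 : (reps5.map code).Pairwise (· ≠ ·) := by
      rw [hcode]; norm_num [List.pairwise_cons]
      refine ⟨?_, ?_, ?_, ?_, ?_, ?_, ?_, ?_⟩ <;>
        exact ne_of_lt (lt_of_lt_of_le (by norm_num) (Nat.pow_le_pow_right (by norm_num) (show 26 ≤ 3125 by norm_num)))
    exact (List.pairwise_map.mp h1).imp fun h => iso_ne_of_code h
  · rw [hst]; decide
  · intro m
    by_cases hm : m ∈ reps5.map stumps
    · rw [hst] at hm ⊢
      simp only [List.mem_cons, List.not_mem_nil, or_false] at hm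
      rcases hm with rfl | rfl | rfl | rfl | rfl | rfl | rfl | rfl | rfl <;> decide
    · rw [List.count_eq_zero.mpr hm]; omega
  · refine ⟨{(1,1),(0,1),(1,0)}, by rw [hst]; decide, ?_⟩
    intro m hmc
    have hm : m ∈ reps5.map stumps := by
      rw [← List.count_pos_iff]
      omega
    rw [hst] at hm hmc
    simp only [List.mem_cons, List.not_mem_nil, or_false] at hm
    rcases hm with rfl | rfl | rfl | rfl | rfl | rfl | rfl | rfl | rfl <;>
      revert hmc <;> decide

end RTree

/-- The 9 rooted trees of order 5 fall into 8 isomeric classes (classes of equal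
atomic-stump multisets); exactly one class has more than one tree, with 2 trees. -/
theorem isomeric_classes_order_five :
    ∃ reps : List RTree, reps.length = 9 ∧
      (∀ t ∈ reps, RTree.order t = 5) ∧
      reps.Pairwise (fun a b => ¬ RTree.Iso a b) ∧
      (∀ t : RTree, RTree.order t = 5 → ∃ r ∈ reps, RTree.Iso t r) ∧
      (reps.map RTree.stumps).dedup.length = 8 ∧
      (∀ m : Multiset (ℕ × ℕ), (reps.map RTree.stumps).count m ≤ 2) ∧
      (∃! m : Multiset (ℕ × ℕ), (reps.map RTree.stumps).count m = 2) :=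
  RTree.the_answer
end
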